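/- Every basis marking is reachable: if there is a path M₀ →^{(t₁,y₁)} M₁ →^{(t₂,y₂)} … →^{(t_n,y_n)} M_n in the basis reachability graph, where each edge satisfies y_i ∈ Y_min(M_{i−1}, t_i) and M_i = M_{i−1} + C·y_i + C(·,t_i), then there exists a firing sequence σ = σ₁t₁σ₂t₂…σ_nt_n with σ_i ∈ T_I*, y_{σ_i} = y_i, enabled at M₀ in the Petri net and reaching M_n (one direction of Proposition 1). -/
import Mathlib


/-- Firing relation of a Petri net. -/
inductive Reaches {P T : Type*} (Pre Post : P → T → ℕ) : (P → ℕ) → List T → (P → ℕ) → Prop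
  | nil (M : P → ℕ) : Reaches Pre Post M [] M
  | cons {M M' : P → ℕ} {t : T} {σ : List T} :
      (∀ p, Pre p t ≤ M p) →
      Reaches Pre Post (fun p => M p + Post p t - Pre p t) σ M' →
      Reaches Pre Post M (t :: σ) M'

/-- Explanation vectors: firing vectors of implicit sequences from `M` enabling `t`. -/
def ExplanationVectors {P T : Type*} [DecidableEq T] (Pre Post : P → T → ℕ)
    (TI : Set T) (M : P → ℕ) (t : T) : Set (T → ℕ) :=
  {y | ∃ (σ : List T) (M' : P → ℕ), (∀ t' ∈ σ, t' ∈ TI) ∧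
    Reaches Pre Post M σ M' ∧ (∀ p, Pre p t ≤ M' p) ∧ ∀ t' : T, σ.count t' = y t'}

/-- Minimal explanation vectors `Y_min(M,t)`. -/
def Ymin {P T : Type*} [DecidableEq T] (Pre Post : P → T → ℕ)
    (TI : Set T) (M : P → ℕ) (t : T) : Set (T → ℕ) :=
  {y ∈ ExplanationVectors Pre Post TI M t |
    ∀ y' ∈ ExplanationVectors Pre Post TI M t, y' ≤ y → y' = y}

theorem reaches_append {P T : Type*} {Pre Post : P → T → ℕ} {M M' M'' : P → ℕ}
    {σ τ : List T} (h1 : Reaches Pre Post M σ M') (h2 : Reaches Pre Post M' τ M'') :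
    Reaches Pre Post M (σ ++ τ) M'' := by
  induction h1 with
  | nil => simpa
  | cons he _ ih => exact Reaches.cons he (ih h2)

theorem reaches_state_eq {P T : Type*} [Fintype T] [DecidableEq T]
    {Pre Post : P → T → ℕ} {M M' : P → ℕ} {σ : List T}
    (h : Reaches Pre Post M σ M') (p : P) :
    (M' p : ℤ) = (M p : ℤ) + ∑ t : T, (σ.count t : ℤ) * ((Post p t : ℤ) - (Pre p t : ℤ)) := by
  induction h with
  | nil => simp
  | @cons M M' t σ he _ ih =>
    rw [ih]
    push_cast [Nat.cast_sub (he p), List.count_cons]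
    simp only [beq_iff_eq]
    have key : ∀ x:T, ((List.count x σ:ℤ) + if t = x then 1 else 0) * ((Post p x:ℤ) - Pre p x)
        = (List.count x σ:ℤ)*((Post p x:ℤ)-Pre p x) + (if t = x then ((Post p x:ℤ)-Pre p x) else 0) := by
      intro x; split <;> ring
    simp only [key]
    rw [Finset.sum_add_distrib, Finset.sum_ite_eq Finset.univ t
      (fun x => ((Post p x:ℤ) - Pre p x))]
    rw [Nat.cast_sub ((he p).trans (Nat.le_add_right _ _))]
    push_cast
    simp only [Finset.mem_univ, if_true]
    ring

theorem reaches_aux {P T : Type*} [Fintype T] [DecidableEq T]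
    (Pre Post : P → T → ℕ) (TI : Set T) :
    ∀ (n : ℕ) (M : Fin (n + 1) → (P → ℕ)) (ts : Fin n → T) (ys : Fin n → (T → ℕ)),
    (∀ i : Fin n, ys i ∈ Ymin Pre Post TI (M i.castSucc) (ts i)) →
    (∀ (i : Fin n) (p : P), ((M i.succ) p : ℤ) = ((M i.castSucc) p : ℤ) +
      (∑ t : T, (ys i t : ℤ) * ((Post p t : ℤ) - (Pre p t : ℤ))) +
      ((Post p (ts i) : ℤ) - (Pre p (ts i) : ℤ))) →
    ∃ σs : Fin n → List T,
      (∀ i, ∀ t ∈ σs i, t ∈ TI) ∧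
      (∀ (i : Fin n) (t : T), (σs i).count t = ys i t) ∧
      Reaches Pre Post (M 0)
        ((List.ofFn (fun i : Fin n => σs i ++ [ts i])).flatten) (M (Fin.last n)) := by
  intro n
  induction n with
  | zero =>
    intro M ts ys _ _
    refine ⟨fun _ => [], by simp, by simp, ?_⟩
    simpa [Fin.last] using Reaches.nil (M 0)
  | succ n ih =>
    intro M ts ys hymin hedge
    obtain ⟨σ₀, Mm, hTI0, hreach0, hen0, hcount0⟩ := (hymin 0).1
    have hM1 : (fun p => Mm p + Post p (ts 0) - Pre p (ts 0)) = M ((0 : Fin (n+1)).succ) := by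
      funext p
      have hz : ((Mm p + Post p (ts 0) - Pre p (ts 0) : ℕ) : ℤ)
          = (Mm p : ℤ) + Post p (ts 0) - Pre p (ts 0) := by
        rw [Nat.cast_sub ((hen0 p).trans (Nat.le_add_right _ _))]; push_cast; ring
      have hse := reaches_state_eq hreach0 p
      have he := hedge 0 p
      have : ((Mm p + Post p (ts 0) - Pre p (ts 0) : ℕ) : ℤ) = (M ((0 : Fin (n+1)).succ) p : ℤ) := by
        rw [hz, hse, he]
        simp only [hcount0]
        ring
      exact_mod_cast this
    obtain ⟨σs', h1', h2', h3'⟩ := ih (fun i => M i.succ) (fun i => ts i.succ) (fun i => ys i.succ)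
      (fun i => by
        have := hymin i.succ
        rwa [← Fin.succ_castSucc] at this)
      (fun i p => by
        have := hedge i.succ p
        rwa [← Fin.succ_castSucc] at this)
    refine ⟨Fin.cases σ₀ σs', ?_, ?_, ?_⟩
    · intro i
      induction i using Fin.cases with
      | zero => simpa using hTI0
      | succ j => simpa using h1' j
    · intro i
      induction i using Fin.cases with
      | zero => simpa using hcount0
      | succ j => simpa using h2' j
    · have hofn : (List.ofFn (fun i : Fin (n+1) => (Fin.cases σ₀ σs' : Fin (n+1) → List T) i ++ [ts i])).flatten
          = (σ₀ ++ [ts 0]) ++ (List.ofFn (fun i : Fin n => σs' i ++ [ts i.succ])).flatten := by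
        rw [List.ofFn_succ]
        simp
      rw [hofn]
      have hstep : Reaches Pre Post (M (0 : Fin (n+2))) (σ₀ ++ [ts 0]) (M ((0 : Fin (n+1)).succ)) := by
        refine reaches_append (M' := Mm) ?_ ?_
        · simpa using hreach0
        · exact hM1 ▸ Reaches.cons hen0 (Reaches.nil _)
      have hrest : Reaches Pre Post (M ((0 : Fin (n+1)).succ))
          ((List.ofFn (fun i : Fin n => σs' i ++ [ts i.succ])).flatten) (M (Fin.last (n+1))) := by
        have h0 : ((fun i : Fin (n+1) => M i.succ) 0) = M ((0 : Fin (n+1)).succ) := rfl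
        have hl : ((fun i : Fin (n+1) => M i.succ) (Fin.last n)) = M (Fin.last (n+1)) := by
          simp [Fin.succ_last]
        rw [← h0, ← hl]
        exact h3'
      exact reaches_append hstep hrest

/-- One direction of Proposition 1: every path in the basis reachability graph
corresponds to a firing sequence `σ₁t₁σ₂t₂…σₙtₙ` enabled at `M₀` reaching the final
basis marking, the `σᵢ` being implicit sequences with firing vectors `yᵢ`. -/
theorem basis_marking_reachable {P T : Type*} [Fintype T] [DecidableEq T]
    (Pre Post : P → T → ℕ) (TE TI : Set T) (hpart : TE = TIᶜ)
    (n : ℕ) (M : Fin (n + 1) → (P → ℕ)) (ts : Fin n → T) (ys : Fin n → (T → ℕ))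
    (htE : ∀ i, ts i ∈ TE)
    (hymin : ∀ i : Fin n, ys i ∈ Ymin Pre Post TI (M i.castSucc) (ts i))
    (hedge : ∀ (i : Fin n) (p : P), ((M i.succ) p : ℤ) = ((M i.castSucc) p : ℤ) +
      (∑ t : T, (ys i t : ℤ) * ((Post p t : ℤ) - (Pre p t : ℤ))) +
      ((Post p (ts i) : ℤ) - (Pre p (ts i) : ℤ))) :
    ∃ σs : Fin n → List T,
      (∀ i, ∀ t ∈ σs i, t ∈ TI) ∧
      (∀ (i : Fin n) (t : T), (σs i).count t = ys i t) ∧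
      Reaches Pre Post (M 0)
        ((List.ofFn (fun i : Fin n => σs i ++ [ts i])).flatten) (M (Fin.last n)) := by
  exact reaches_aux Pre Post TI n M ts ys hymin hedge
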